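/- In the SIRS model with independent infectious and immune times, mean infectious time γ⁻¹ and mean immune time μ⁻¹, with λ > γ, and with initial distributions G₀ = G_e and F₀ = F_e (equilibrium distributions), the unique nontrivial equilibrium of the fluid equations is S* = γ/λ, I* = (1 − γ/λ)/(1 + γ/μ), R* = (γ/μ)·I*. In particular λ(1 − I* − R*) = γ and μR* = γI*. -/

import Mathlib

open MeasureTheory Set Filter Topology

/-- `p = (I*, R*)` is an equilibrium of the SIRS fluid equations with independent
infectious (c.d.f. `G`) and immune (c.d.f. `F`) periods, with initial
distributions given by the equilibrium (stationary excess) distributions, so that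
`G₀ᶜ(t) = γ ∫ₜ^∞ Gᶜ`, `F₀ᶜ(t) = μ ∫ₜ^∞ Fᶜ`, `dG₀(u) = γ Gᶜ(u) du` and
`Ψ(t) = ∫ Fᶜ(t-u) dG(u)`. -/
def SIRSEquil (lam γ μ : ℝ) (G : StieltjesFunction ℝ) (F : ℝ → ℝ) (p : ℝ × ℝ) : Prop :=
  (∀ t ≥ (0:ℝ),
    p.1 = γ * p.1 * (∫ s in Set.Ioi t, (1 - G s))
      + lam * p.1 * (1 - p.1 - p.2) * (∫ s in (0:ℝ)..t, (1 - G s))) ∧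
  (∀ t ≥ (0:ℝ),
    p.2 = μ * p.2 * (∫ s in Set.Ioi t, (1 - F s))
      + p.1 * (∫ u in (0:ℝ)..t, (1 - F (t - u)) * (γ * (1 - G u)))
      + lam * (1 - p.1 - p.2) * p.1 *
          (∫ s in (0:ℝ)..t, (∫ u in Set.Iic s, (1 - F (s - u)) ∂G.measure)))

section helpers

lemma tail_add (h : ℝ → ℝ) (hi : IntegrableOn h (Ioi 0)) {t : ℝ} (ht : 0 ≤ t) :
    (∫ s in Ioi t, h s) + ∫ s in (0:ℝ)..t, h s = ∫ s in Ioi (0:ℝ), h s := by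
  rw [intervalIntegral.integral_of_le ht, add_comm,
    ← setIntegral_union (Ioc_disjoint_Ioi le_rfl) measurableSet_Ioi
      (hi.mono_set Ioc_subset_Ioi_self) (hi.mono_set (Ioi_subset_Ioi ht)),
    Ioc_union_Ioi_eq_Ioi ht]

lemma int_of_ne {h : ℝ → ℝ} {s : Set ℝ} (hne : (∫ x in s, h x) ≠ 0) : IntegrableOn h s := by
  by_contra hcon
  exact hne (integral_undef hcon)

lemma exists_pos_part (h : ℝ → ℝ) (hi : IntegrableOn h (Ioi 0))
    (hne : (∫ s in Ioi (0:ℝ), h s) ≠ 0) :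
    ∃ t : ℝ, 0 ≤ t ∧ (∫ s in (0:ℝ)..t, h s) ≠ 0 := by
  by_contra hcon
  push_neg at hcon
  have hU : (⋃ n : ℕ, Ioc (0:ℝ) n) = Ioi 0 := by
    ext x; simp only [mem_iUnion, mem_Ioc, mem_Ioi]
    constructor
    · rintro ⟨n, h1, _⟩; exact h1
    · intro hx; obtain ⟨n, hn⟩ := exists_nat_ge x; exact ⟨n, hx, hn⟩
  have hlim := tendsto_setIntegral_of_monotone (fun n : ℕ => measurableSet_Ioc)
    (fun m n hmn => Ioc_subset_Ioc le_rfl (by exact_mod_cast hmn)) (hU ▸ hi)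
  rw [hU] at hlim
  have h0 : ∀ n : ℕ, (∫ s in Ioc (0:ℝ) (n:ℝ), h s) = 0 := fun n => by
    rw [← intervalIntegral.integral_of_le (Nat.cast_nonneg n)]
    exact hcon n (Nat.cast_nonneg n)
  simp only [h0] at hlim
  exact hne (tendsto_nhds_unique hlim tendsto_const_nhds)

lemma ii_of_bound (g : ℝ → ℝ) (hg : Measurable g) (hb : ∀ x, |g x| ≤ 1) (a b : ℝ) :
    IntervalIntegrable g volume a b := by
  rw [intervalIntegrable_iff]
  have : IsFiniteMeasure (volume.restrict (uIoc a b)) := by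
    constructor
    rw [Measure.restrict_apply_univ, uIoc, Real.volume_Ioc]
    exact ENNReal.ofReal_lt_top
  exact Integrable.mono' (integrable_const 1) hg.aestronglyMeasurable
    (ae_of_all _ fun x => by simpa using hb x)

end helpers

section core
variable {F : ℝ → ℝ} (hFmono : Monotone F) (hF01 : ∀ s, F s ∈ Set.Icc (0:ℝ) 1)
  {G : StieltjesFunction ℝ} (hGneg : ∀ s ≤ (0:ℝ), G s = 0) (hG1 : ∀ s, G s ≤ 1)

lemma swap_core (ν : Measure ℝ) [IsLocallyFiniteMeasure ν] {t : ℝ}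
    (f : ℝ × ℝ → ℝ) (hf : Measurable f) (hbd : ∀ p, |f p| ≤ 1) :
    (∫ s in Ioc (0:ℝ) t, (∫ u in Ioc (0:ℝ) t, f (s, u) ∂ν)) =
      ∫ u in Ioc (0:ℝ) t, (∫ s in Ioc (0:ℝ) t, f (s, u)) ∂ν := by
  have h1 : IsFiniteMeasure (volume.restrict (Ioc (0:ℝ) t)) := by
    constructor
    rw [Measure.restrict_apply_univ, Real.volume_Ioc]
    exact ENNReal.ofReal_lt_top
  have h2 : IsFiniteMeasure (ν.restrict (Ioc (0:ℝ) t)) := by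
    constructor
    rw [Measure.restrict_apply_univ]
    exact measure_Ioc_lt_top
  have hint : Integrable f ((volume.restrict (Ioc (0:ℝ) t)).prod (ν.restrict (Ioc (0:ℝ) t))) := by
    refine Integrable.mono' (integrable_const 1) hf.aestronglyMeasurable ?_
    exact ae_of_all _ fun p => by simpa using hbd p
  exact integral_integral_swap hint

include hF01 in
omit hFmono in
lemma L3bound : ∀ x : ℝ, |1 - F x| ≤ 1 := by
  intro x
  rw [abs_le]
  constructor <;> [linarith [(hF01 x).2]; linarith [(hF01 x).1]]

include hGneg in
lemma nu_Iic0 : G.measure (Iic (0:ℝ)) = 0 := by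
  have htb : Tendsto G atBot (𝓝 0) := by
    refine Tendsto.congr' ?_ (tendsto_const_nhds (α := ℝ))
    filter_upwards [eventually_le_atBot (0:ℝ)] with s hs
    exact (hGneg s hs).symm
  rw [G.measure_Iic htb, hGneg 0 le_rfl]
  simp

include hFmono hF01 hGneg in
lemma L1 {t : ℝ} (ht : 0 ≤ t) :
    (∫ s in (0:ℝ)..t, (∫ u in Set.Iic s, (1 - F (s - u)) ∂G.measure)) =
      ∫ v in Ioc (0:ℝ) t, (∫ s in v..t, (1 - F (s - v))) ∂G.measure := by
  have hF : Measurable F := hFmono.measurable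
  set f : ℝ × ℝ → ℝ := fun p => if p.2 ≤ p.1 then 1 - F (p.1 - p.2) else 0 with hfdef
  have hfm : Measurable f :=
    Measurable.ite (measurableSet_le measurable_snd measurable_fst)
      (measurable_const.sub (hF.comp (measurable_fst.sub measurable_snd))) measurable_const
  have hfbd : ∀ p, |f p| ≤ 1 := by
    intro p
    by_cases h : p.2 ≤ p.1 <;> simp [hfdef, h, L3bound hF01]
  rw [intervalIntegral.integral_of_le ht]
  have step1 : (∫ s in Ioc (0:ℝ) t, (∫ u in Set.Iic s, (1 - F (s - u)) ∂G.measure)) =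
      ∫ s in Ioc (0:ℝ) t, (∫ u in Ioc (0:ℝ) t, f (s, u) ∂G.measure) := by
    refine setIntegral_congr_fun measurableSet_Ioc fun s hs => ?_
    have h1 : (Iic s : Set ℝ) =ᵐ[G.measure] Ioc (0:ℝ) s := by
      rw [Filter.eventuallyEq_set]
      have : G.measure (Iic (0:ℝ)) = 0 := nu_Iic0 hGneg
      filter_upwards [measure_eq_zero_iff_ae_notMem.mp this] with u hu
      simp only [mem_Iic, mem_Ioc, mem_Iic] at *
      constructor
      · intro h; exact ⟨lt_of_not_ge (fun h0 => hu h0), h⟩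
      · intro h; exact h.2
    rw [setIntegral_congr_set h1]
    have h2 : (∫ u in Ioc (0:ℝ) t, f (s, u) ∂G.measure) =
        ∫ u in Ioc (0:ℝ) t ∩ Iic s, (1 - F (s - u)) ∂G.measure := by
      rw [← setIntegral_indicator measurableSet_Iic]
      refine setIntegral_congr_fun measurableSet_Ioc fun u _ => ?_
      simp only [hfdef, indicator, mem_Iic]
    rw [h2, Ioc_inter_Iic, min_eq_right hs.2]
  rw [step1, swap_core G.measure f hfm hfbd]
  refine setIntegral_congr_fun measurableSet_Ioc fun v hv => ?_
  have h3 : (∫ s in Ioc (0:ℝ) t, f (s, v)) = ∫ s in Ioc (0:ℝ) t ∩ Ici v, (1 - F (s - v)) := by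
    rw [← setIntegral_indicator measurableSet_Ici]
    refine setIntegral_congr_fun measurableSet_Ioc fun s _ => ?_
    simp only [hfdef, indicator, mem_Ici]
  have h4 : Ioc (0:ℝ) t ∩ Ici v = Icc v t := by
    ext x
    simp only [mem_inter_iff, mem_Ioc, mem_Icc, mem_Ici]
    exact ⟨fun ⟨⟨_, hx2⟩, hx3⟩ => ⟨hx3, hx2⟩,
      fun ⟨hx1, hx2⟩ => ⟨⟨lt_of_lt_of_le hv.1 hx1, hx2⟩, hx1⟩⟩
  rw [h3, h4, integral_Icc_eq_integral_Ioc, ← intervalIntegral.integral_of_le hv.2]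

include hFmono hF01 hGneg in
lemma L2 {t : ℝ} (ht : 0 ≤ t) :
    (∫ u in (0:ℝ)..t, (1 - F (t - u)) * G u) =
      ∫ v in Ioc (0:ℝ) t, (∫ u in v..t, (1 - F (t - u))) ∂G.measure := by
  have hF : Measurable F := hFmono.measurable
  have hG0 : G 0 = 0 := hGneg 0 le_rfl
  have hGnn : ∀ u, 0 ≤ G u := fun u => by
    rcases le_or_gt u 0 with h | h
    · rw [hGneg u h]
    · rw [← hG0]; exact G.mono h.le
  set f : ℝ × ℝ → ℝ := fun p => if p.2 ≤ p.1 then 1 - F (t - p.1) else 0 with hfdef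
  have hfm : Measurable f :=
    Measurable.ite (measurableSet_le measurable_snd measurable_fst)
      (measurable_const.sub (hF.comp (measurable_const.sub measurable_fst))) measurable_const
  have hfbd : ∀ p, |f p| ≤ 1 := by
    intro p
    by_cases h : p.2 ≤ p.1 <;> simp [hfdef, h, L3bound hF01]
  rw [intervalIntegral.integral_of_le ht]
  have step1 : (∫ u in Ioc (0:ℝ) t, (1 - F (t - u)) * G u) =
      ∫ u in Ioc (0:ℝ) t, (∫ v in Ioc (0:ℝ) t, f (u, v) ∂G.measure) := by
    refine setIntegral_congr_fun measurableSet_Ioc fun u hu => ?_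
    have h2 : (∫ v in Ioc (0:ℝ) t, f (u, v) ∂G.measure) =
        ∫ v in Ioc (0:ℝ) t ∩ Iic u, (fun _ => 1 - F (t - u)) v ∂G.measure := by
      rw [← setIntegral_indicator measurableSet_Iic]
      refine setIntegral_congr_fun measurableSet_Ioc fun v _ => ?_
      simp only [hfdef, indicator, mem_Iic]
    rw [h2, Ioc_inter_Iic, min_eq_right hu.2, setIntegral_const, smul_eq_mul,
      measureReal_def, G.measure_Ioc, hG0, sub_zero, ENNReal.toReal_ofReal (hGnn u), mul_comm]
  rw [step1, swap_core G.measure f hfm hfbd]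
  refine setIntegral_congr_fun measurableSet_Ioc fun v hv => ?_
  have h3 : (∫ u in Ioc (0:ℝ) t, f (u, v)) = ∫ u in Ioc (0:ℝ) t ∩ Ici v, (1 - F (t - u)) := by
    rw [← setIntegral_indicator measurableSet_Ici]
    refine setIntegral_congr_fun measurableSet_Ioc fun u _ => ?_
    simp only [hfdef, indicator, mem_Ici]
  have h4 : Ioc (0:ℝ) t ∩ Ici v = Icc v t := by
    ext x
    simp only [mem_inter_iff, mem_Ioc, mem_Icc, mem_Ici]
    exact ⟨fun ⟨⟨_, hx2⟩, hx3⟩ => ⟨hx3, hx2⟩,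
      fun ⟨hx1, hx2⟩ => ⟨⟨lt_of_lt_of_le hv.1 hx1, hx2⟩, hx1⟩⟩
  rw [h3, h4, integral_Icc_eq_integral_Ioc, ← intervalIntegral.integral_of_le hv.2]

include hFmono hF01 hGneg hG1 in
lemma key_ident (γ : ℝ) {t : ℝ} (ht : 0 ≤ t) :
    (∫ u in (0:ℝ)..t, (1 - F (t - u)) * (γ * (1 - G u)))
      + γ * (∫ s in (0:ℝ)..t, (∫ u in Set.Iic s, (1 - F (s - u)) ∂G.measure))
    = γ * ∫ s in (0:ℝ)..t, (1 - F s) := by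
  have hF : Measurable F := hFmono.measurable
  have hGm : Measurable G := G.mono.measurable
  have hG0 : G 0 = 0 := hGneg 0 le_rfl
  have hGnn : ∀ u, 0 ≤ G u := fun u => by
    rcases le_or_gt u 0 with h | h
    · rw [hGneg u h]
    · rw [← hG0]; exact G.mono h.le
  have i1 : IntervalIntegrable (fun u => 1 - F (t - u)) volume 0 t :=
    ii_of_bound _ (measurable_const.sub (hF.comp (measurable_const.sub measurable_id)))
      (fun x => L3bound hF01 _) 0 t
  have i2 : IntervalIntegrable (fun u => (1 - F (t - u)) * G u) volume 0 t := by
    refine ii_of_bound _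
      ((measurable_const.sub (hF.comp (measurable_const.sub measurable_id))).mul hGm)
      (fun x => ?_) 0 t
    show |(1 - F (t - x)) * G x| ≤ 1; rw [abs_mul]
    calc |1 - F (t - x)| * |G x| ≤ 1 * 1 := by
          refine mul_le_mul (L3bound hF01 _) ?_ (abs_nonneg _) zero_le_one
          rw [abs_le]; exact ⟨by linarith [hGnn x], hG1 x⟩
      _ = 1 := one_mul 1
  have hA : (∫ u in (0:ℝ)..t, (1 - F (t - u)) * (γ * (1 - G u)))
      = γ * (∫ s in (0:ℝ)..t, (1 - F s)) - γ * (∫ u in (0:ℝ)..t, (1 - F (t - u)) * G u) := by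
    have e1 : ∀ u ∈ Set.uIcc (0:ℝ) t, (1 - F (t - u)) * (γ * (1 - G u))
        = γ * (1 - F (t - u)) - γ * ((1 - F (t - u)) * G u) := fun u _ => by ring
    rw [intervalIntegral.integral_congr e1,
      intervalIntegral.integral_sub (i1.const_mul γ) (i2.const_mul γ),
      intervalIntegral.integral_const_mul, intervalIntegral.integral_const_mul]
    congr 2
    rw [intervalIntegral.integral_comp_sub_left (fun x => 1 - F x) t, sub_self, sub_zero]
  have hL3 : ∀ v : ℝ, (∫ s in v..t, (1 - F (s - v))) = ∫ s in v..t, (1 - F (t - s)) := by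
    intro v
    rw [intervalIntegral.integral_comp_sub_right (fun x => (1:ℝ) - F x) v,
      intervalIntegral.integral_comp_sub_left (fun x => (1:ℝ) - F x) t, sub_self, sub_self]
  have h5 : (∫ v in Ioc (0:ℝ) t, (∫ s in v..t, (1 - F (s - v))) ∂G.measure)
      = ∫ v in Ioc (0:ℝ) t, (∫ u in v..t, (1 - F (t - u))) ∂G.measure :=
    setIntegral_congr_fun measurableSet_Ioc fun v _ => hL3 v
  rw [hA, L1 hFmono hF01 hGneg ht, h5, ← L2 hFmono hF01 hGneg ht]
  ring

end core

/-- In the SIRS model with independent infectious and immune times, mean infectious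
time `γ⁻¹`, mean immune time `μ⁻¹`, `λ > γ`, and equilibrium initial
distributions, the unique nontrivial equilibrium is
`S* = γ/λ`, `I* = (1-γ/λ)/(1+γ/μ)`, `R* = (γ/μ) I*`; in particular
`λ(1 - I* - R*) = γ` and `μ R* = γ I*`. -/
theorem sirs_equilibrium
    (lam γ μ : ℝ) (hγ : 0 < γ) (hμ : 0 < μ) (hlam : γ < lam)
    (F : ℝ → ℝ) (hFmono : Monotone F) (hF01 : ∀ s, F s ∈ Set.Icc (0:ℝ) 1)
    (hFneg : ∀ s < (0:ℝ), F s = 0)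
    (hFmean : (∫ s in Set.Ioi (0:ℝ), (1 - F s)) = μ⁻¹)
    (G : StieltjesFunction ℝ) (hGneg : ∀ s ≤ (0:ℝ), G s = 0) (hG1 : ∀ s, G s ≤ 1)
    (hGmean : (∫ s in Set.Ioi (0:ℝ), (1 - G s)) = γ⁻¹) :
    SIRSEquil lam γ μ G F
      ((1 - γ/lam)/(1 + γ/μ), (γ/μ) * ((1 - γ/lam)/(1 + γ/μ))) ∧
    (∀ p : ℝ × ℝ, SIRSEquil lam γ μ G F p → p.1 ≠ 0 →
      p = ((1 - γ/lam)/(1 + γ/μ), (γ/μ) * ((1 - γ/lam)/(1 + γ/μ))) ∧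
      lam * (1 - p.1 - p.2) = γ ∧ μ * p.2 = γ * p.1 ∧
      1 - p.1 - p.2 = γ/lam) := by
  have hγ0 : γ ≠ 0 := ne_of_gt hγ
  have hμ0 : μ ≠ 0 := ne_of_gt hμ
  have hlam0 : lam ≠ 0 := ne_of_gt (lt_trans hγ hlam)
  have hd : (1:ℝ) + γ/μ ≠ 0 := by positivity
  have hγ1 : γ * γ⁻¹ = 1 := mul_inv_cancel₀ hγ0
  have hμ1 : μ * μ⁻¹ = 1 := mul_inv_cancel₀ hμ0
  have hGint : IntegrableOn (fun s => 1 - G s) (Ioi 0) :=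
    int_of_ne (by rw [hGmean]; exact inv_ne_zero hγ0)
  have hFint : IntegrableOn (fun s => 1 - F s) (Ioi 0) :=
    int_of_ne (by rw [hFmean]; exact inv_ne_zero hμ0)
  have habG : ∀ t : ℝ, 0 ≤ t →
      (∫ s in Ioi t, (1 - G s)) + (∫ s in (0:ℝ)..t, (1 - G s)) = γ⁻¹ := fun t ht => by
    rw [tail_add _ hGint ht, hGmean]
  have habF : ∀ t : ℝ, 0 ≤ t →
      (∫ s in Ioi t, (1 - F s)) + (∫ s in (0:ℝ)..t, (1 - F s)) = μ⁻¹ := fun t ht => by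
    rw [tail_add _ hFint ht, hFmean]
  have hkey := fun {t : ℝ} (ht : (0:ℝ) ≤ t) => key_ident hFmono hF01 hGneg hG1 γ ht
  -- sufficiency
  have hsuf : ∀ I R : ℝ, lam * (1 - I - R) = γ → μ * R = γ * I →
      SIRSEquil lam γ μ G F (I, R) := by
    intro I R hS hR
    constructor
    · intro t ht
      show I = γ * I * (∫ s in Set.Ioi t, (1 - G s))
        + lam * I * (1 - I - R) * (∫ s in (0:ℝ)..t, (1 - G s))
      have hab := habG t ht
      set a := ∫ s in Set.Ioi t, (1 - G s)
      set b := ∫ s in (0:ℝ)..t, (1 - G s)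
      linear_combination (-(γ*I)) * hab - (I*b) * hS - I * hγ1
    · intro t ht
      show R = μ * R * (∫ s in Set.Ioi t, (1 - F s))
        + I * (∫ u in (0:ℝ)..t, (1 - F (t - u)) * (γ * (1 - G u)))
        + lam * (1 - I - R) * I *
            (∫ s in (0:ℝ)..t, (∫ u in Set.Iic s, (1 - F (s - u)) ∂G.measure))
      have hab := habF t ht
      have hk := hkey ht
      set aF := ∫ s in Set.Ioi t, (1 - F s)
      set bF := ∫ s in (0:ℝ)..t, (1 - F s)
      set P := ∫ s in (0:ℝ)..t, (∫ u in Set.Iic s, (1 - F (s - u)) ∂G.measure)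
      set Ψ := ∫ u in (0:ℝ)..t, (1 - F (t - u)) * (γ * (1 - G u))
      linear_combination (-I) * hk - (I*P) * hS - (μ*R) * hab + bF * hR - R * hμ1
  have hA1 : (1 - γ/lam)/(1 + γ/μ) * (1 + γ/μ) = 1 - γ/lam :=
    div_mul_cancel₀ _ hd
  have hlc : lam * (γ/lam) = γ := by field_simp
  have hmc : μ * (γ/μ) = γ := by field_simp
  have hSstar : lam * (1 - (1 - γ/lam)/(1 + γ/μ) - (γ/μ) * ((1 - γ/lam)/(1 + γ/μ))) = γ := by
    linear_combination (-lam) * hA1 + hlc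
  have hRstar : μ * ((γ/μ) * ((1 - γ/lam)/(1 + γ/μ))) = γ * ((1 - γ/lam)/(1 + γ/μ)) := by
    linear_combination ((1 - γ/lam)/(1 + γ/μ)) * hmc
  refine ⟨hsuf _ _ hSstar hRstar, ?_⟩
  rintro ⟨I, R⟩ hp hI0
  obtain ⟨h1, h2⟩ := hp
  dsimp only at h1 h2 hI0 ⊢
  obtain ⟨t1, ht1, hb1⟩ := exists_pos_part _ hGint (by rw [hGmean]; exact inv_ne_zero hγ0)
  have hS : lam * (1 - I - R) = γ := by
    have hab := habG t1 ht1
    have h1t := h1 t1 ht1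
    set a := ∫ s in Set.Ioi t1, (1 - G s)
    set b := ∫ s in (0:ℝ)..t1, (1 - G s)
    have hz : I * b * (lam * (1 - I - R) - γ) = 0 := by
      linear_combination (-1) * h1t - (γ*I) * hab - I * hγ1
    rcases mul_eq_zero.mp hz with h | h
    · exact absurd h (mul_ne_zero hI0 hb1)
    · linarith
  obtain ⟨t2, ht2, hb2⟩ := exists_pos_part _ hFint (by rw [hFmean]; exact inv_ne_zero hμ0)
  have hR : μ * R = γ * I := by
    have hab := habF t2 ht2
    have h2t := h2 t2 ht2
    have hk := hkey ht2
    set aF := ∫ s in Set.Ioi t2, (1 - F s)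
    set bF := ∫ s in (0:ℝ)..t2, (1 - F s)
    set P := ∫ s in (0:ℝ)..t2, (∫ u in Set.Iic s, (1 - F (s - u)) ∂G.measure)
    have hz : (γ * I - μ * R) * bF = 0 := by
      linear_combination (-1) * h2t - I * hk - (I*P) * hS - (μ*R) * hab - R * hμ1
    rcases mul_eq_zero.mp hz with h | h
    · linarith
    · exact absurd h hb2
  have hSval : 1 - I - R = γ/lam := by
    rw [eq_div_iff hlam0]; linear_combination hS
  have hRval : R = (γ/μ) * I := by
    rw [div_mul_eq_mul_div, eq_div_iff hμ0]; linear_combination hR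
  have hIval : I = (1 - γ/lam)/(1 + γ/μ) := by
    rw [eq_div_iff hd]
    linear_combination (-1) * hRval - hSval
  refine ⟨Prod.ext hIval (by rw [hRval, hIval]), hS, hR, hSval⟩
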